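/- arXiv:1110.6130 — 2 statements merged into one kernel-verified Lean document; each statement's English description precedes it below -/
import Mathlib

section
/- For every n ∈ ℕ with n ≥ 1, the function ψ(t) = (1/(t²-1))·(d/dt)^{n-1}[(t²-1)ⁿ] is a polynomial in t of degree n-1 and satisfies the differential equation (1/2)(t²-1)ψ'' + 2tψ' - (1/2)(n-1)(n+2)ψ = 0. -/
open Polynomial

private lemma iterDeriv_natDegree_aux {p : Polynomial ℝ} :
    ∀ k : ℕ, k ≤ p.natDegree → p ≠ 0 →
      (derivative^[k] p).natDegree = p.natDegree - k ∧ derivative^[k] p ≠ 0 := by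
  intro k
  induction k with
  | zero => intro _ hp; simpa using hp
  | succ k ih =>
    intro hk hp
    obtain ⟨hdeg, hne⟩ := ih (le_trans (Nat.le_succ k) hk) hp
    have hpos : 0 < (derivative^[k] p).natDegree := by omega
    have hd := degree_derivative_eq (derivative^[k] p) hpos
    rw [Function.iterate_succ_apply']
    have hne' : derivative (derivative^[k] p) ≠ 0 := by
      intro h
      rw [h, degree_zero] at hd
      exact (by simp : ((((derivative^[k] p).natDegree - 1 : ℕ) : WithBot ℕ) ≠ ⊥)) hd.symm
    refine ⟨?_, hne'⟩
    have := natDegree_eq_of_degree_eq_some hd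
    omega

private lemma iteratedDeriv_polyEval (p : Polynomial ℝ) :
    ∀ k : ℕ, iteratedDeriv k (fun s : ℝ => p.eval s) = fun t : ℝ => (derivative^[k] p).eval t := by
  intro k
  induction k with
  | zero => simp
  | succ k ih =>
    rw [iteratedDeriv_succ, ih]
    funext t
    rw [Polynomial.deriv]
    exact congrArg (eval t) (Function.iterate_succ_apply' (⇑derivative) k p).symm

/-- Rodrigues-type formula: for `n ≥ 1`, the function
`ψ(t) = (t²-1)⁻¹ (d/dt)^{n-1}[(t²-1)ⁿ]` is a polynomial of degree `n-1`, and it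
satisfies `(1/2)(t²-1)ψ'' + 2tψ' - (1/2)(n-1)(n+2)ψ = 0`. -/
theorem rodrigues_formula_solution (n : ℕ) (hn : 1 ≤ n) :
    ∃ P : Polynomial ℝ, P.degree = (n - 1 : ℕ) ∧
      (∀ t : ℝ, iteratedDeriv (n - 1) (fun s : ℝ => (s ^ 2 - 1) ^ n) t =
        (t ^ 2 - 1) * P.eval t) ∧
      (∀ t : ℝ,
        (1 / 2) * (t ^ 2 - 1) * deriv (deriv (fun s : ℝ => P.eval s)) t +
          2 * t * deriv (fun s : ℝ => P.eval s) t -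
          (1 / 2) * ((n : ℝ) - 1) * ((n : ℝ) + 2) * P.eval t = 0) := by
  obtain ⟨m, rfl⟩ : ∃ m, n = m + 1 := ⟨n - 1, (Nat.succ_pred_eq_of_pos hn).symm⟩
  set S : Polynomial ℝ := X ^ 2 - 1 with hSdef
  set Q : Polynomial ℝ := S ^ (m + 1) with hQdef
  have hdS : derivative S = 2 * X := by
    simp [hSdef, map_ofNat]
    norm_num
  -- base identity : S * Q' = 2(m+1) X Q
  have hbase : S * derivative Q = (2 * ((m : Polynomial ℝ) + 1)) * X * Q := by
    rw [hQdef, derivative_pow, hdS, Nat.add_sub_cancel, Nat.cast_add, Nat.cast_one,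
      map_add, map_one, Polynomial.C_eq_natCast]
    ring
  -- inductive identity
  have hind : ∀ k : ℕ, S * derivative (derivative (derivative^[k] Q)) =
      (2 * ((m : Polynomial ℝ) + 1) - 2 * ((k : Polynomial ℝ) + 1)) * X *
        derivative (derivative^[k] Q) +
      (((k : Polynomial ℝ) + 1) * (2 * ((m : Polynomial ℝ) + 1) - (k : Polynomial ℝ))) *
        derivative^[k] Q := by
    intro k
    induction k with
    | zero =>
      have h := congrArg derivative hbase
      simp only [derivative_mul, hdS, derivative_X, derivative_natCast, derivative_one,
        derivative_add, derivative_ofNat, zero_mul, mul_zero, zero_add, add_zero, mul_one] at h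
      simp only [Function.iterate_zero_apply, Nat.cast_zero]
      linear_combination h
    | succ k ihk =>
      have h := congrArg derivative ihk
      simp only [derivative_mul, hdS, derivative_X, derivative_natCast, derivative_one,
        derivative_sub, derivative_add, derivative_ofNat, zero_mul, mul_zero, zero_add,
        add_zero, mul_one, zero_sub, sub_zero, neg_zero] at h
      rw [Function.iterate_succ_apply']
      push_cast
      linear_combination h
  -- key: S * D'' = (m+1)(m+2) D  with  D = Q^{(m)}
  have key : S * derivative (derivative (derivative^[m] Q)) =
      (((m : Polynomial ℝ) + 1) * ((m : Polynomial ℝ) + 2)) * derivative^[m] Q := by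
    linear_combination hind m
  -- divisibility
  have hdvd : S ∣ derivative^[m] Q := by
    have := pow_sub_dvd_iterate_derivative_pow S (m + 1) m
    simpa [Nat.add_sub_cancel_left] using this
  obtain ⟨P, hP⟩ := hdvd
  -- degrees
  have hSmonic : S.Monic := by
    have := monic_X_pow_sub_C (1 : ℝ) (n := 2) two_ne_zero
    simpa [hSdef] using this
  have hSdeg : S.natDegree = 2 := by
    rw [hSdef]
    compute_degree!
  have hS0 : S ≠ 0 := hSmonic.ne_zero
  have hQ0 : Q ≠ 0 := pow_ne_zero _ hS0
  have hQdeg : Q.natDegree = 2 * (m + 1) := by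
    rw [hQdef, natDegree_pow, hSdeg]; ring
  have hDle : m ≤ Q.natDegree := by omega
  obtain ⟨hDdeg, hD0⟩ := iterDeriv_natDegree_aux m hDle hQ0
  have hP0 : P ≠ 0 := by
    intro h
    rw [h, mul_zero] at hP
    exact hD0 hP
  have hPdeg : P.natDegree = m := by
    have h2 : (derivative^[m] Q).natDegree = S.natDegree + P.natDegree := by
      rw [hP, natDegree_mul hS0 hP0]
    rw [hDdeg, hQdeg, hSdeg] at h2
    omega
  -- polynomial ODE
  rw [hP] at key
  simp only [derivative_mul, derivative_add, hdS, derivative_X, derivative_ofNat,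
    zero_mul, mul_zero, zero_add, add_zero, mul_one] at key
  have final : S * derivative (derivative P) + 4 * X * derivative P + 2 * P =
      (((m : Polynomial ℝ) + 1) * ((m : Polynomial ℝ) + 2)) * P := by
    apply mul_left_cancel₀ hS0
    linear_combination key
  refine ⟨P, ?_, ?_, ?_⟩
  · rw [degree_eq_natDegree hP0, hPdeg]
    norm_num
  · intro t
    have hfun : (fun s : ℝ => (s ^ 2 - 1) ^ (m + 1)) = fun s : ℝ => Q.eval s := by
      funext s; simp [hQdef, hSdef]
    rw [show m + 1 - 1 = m from rfl, hfun, iteratedDeriv_polyEval Q m, hP]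
    simp [hSdef]
  · intro t
    have hderiv1 : deriv (fun s : ℝ => P.eval s) = fun s : ℝ => P.derivative.eval s := by
      funext s; rw [Polynomial.deriv]
    have hderiv2 : deriv (deriv (fun s : ℝ => P.eval s)) t = P.derivative.derivative.eval t := by
      rw [hderiv1, Polynomial.deriv]
    have hev := congrArg (fun p : Polynomial ℝ => p.eval t) final
    simp only [eval_add, eval_mul, eval_sub, eval_pow, eval_X, eval_one, eval_ofNat,
      eval_natCast, hSdef] at hev
    rw [hderiv2, hderiv1]
    push_cast
    linear_combination (1 / 2 : ℝ) * hev
end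

section
/- For every a, b ∈ ℂ and integer k ≥ 1, the iterated integral ∬ (at+b)^k/(t²-1) dt dt lies in the algebra ℂ[t, arctanh(1/t), log(t²-1)], i.e. there exists a polynomial expression F in t, arctanh(1/t), and log(t²-1) with ∂²F/∂t² = (at+b)^k/(t²-1) on the domain t > 1. -/
open MvPolynomial Filter Finset

noncomputable def polyEv (P : MvPolynomial (Fin 3) ℂ) : ℝ → ℂ :=
  fun s : ℝ => MvPolynomial.eval
      (![(s : ℂ),
         (((1 / 2) * Real.log ((s + 1) / (s - 1)) : ℝ) : ℂ),
         ((Real.log (s ^ 2 - 1) : ℝ) : ℂ)]) P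

noncomputable def funU : ℝ → ℂ :=
  fun s : ℝ => (((1 / 2) * Real.log ((s + 1) / (s - 1)) : ℝ) : ℂ)

noncomputable def funL : ℝ → ℂ := fun s : ℝ => ((Real.log (s ^ 2 - 1) : ℝ) : ℂ)

/-- `f` is a second derivative of a polynomial expression in `t, arctanh(1/t), log(t²-1)`. -/
def GoodFun (f : ℝ → ℂ) : Prop :=
  ∃ P : MvPolynomial (Fin 3) ℂ, ∃ g : ℝ → ℂ,
    (∀ t : ℝ, 1 < t → HasDerivAt (polyEv P) (g t) t) ∧
    (∀ t : ℝ, 1 < t → HasDerivAt g (f t) t)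

lemma denom_ne (t : ℝ) (ht : 1 < t) : ((t : ℂ) ^ 2 - 1) ≠ 0 := by
  have h : ((t : ℂ) ^ 2 - 1) = ((t ^ 2 - 1 : ℝ) : ℂ) := by push_cast; ring
  rw [h]
  exact Complex.ofReal_ne_zero.mpr (by nlinarith)

lemma hasDerivAt_funU (t : ℝ) (ht : 1 < t) :
    HasDerivAt funU (-(1 / ((t : ℂ) ^ 2 - 1))) t := by
  have ha : HasDerivAt (fun s : ℝ => Real.log (s + 1)) (1 / (t + 1)) t := by
    simpa using ((hasDerivAt_id t).add_const 1).log (by simp only [id_eq]; intro h; linarith)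
  have hb : HasDerivAt (fun s : ℝ => Real.log (s - 1)) (1 / (t - 1)) t := by
    simpa using ((hasDerivAt_id t).sub_const 1).log (by simp only [id_eq]; intro h; linarith)
  have h1 : HasDerivAt (fun s : ℝ => (1 / 2) * (Real.log (s + 1) - Real.log (s - 1)))
      ((1 / 2) * (1 / (t + 1) - 1 / (t - 1))) t := (ha.sub hb).const_mul _
  have heq : (fun s : ℝ => (1 / 2) * Real.log ((s + 1) / (s - 1))) =ᶠ[nhds t]
      (fun s : ℝ => (1 / 2) * (Real.log (s + 1) - Real.log (s - 1))) := by
    filter_upwards [isOpen_Ioi.mem_nhds ht] with s hs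
    rw [Real.log_div (by simp only [Set.mem_Ioi] at hs; linarith)
        (by simp only [Set.mem_Ioi] at hs; linarith)]
  have h2 : HasDerivAt (fun s : ℝ => (1 / 2) * Real.log ((s + 1) / (s - 1)))
      ((1 / 2) * (1 / (t + 1) - 1 / (t - 1))) t := h1.congr_of_eventuallyEq heq
  have h3 := h2.ofReal_comp
  have hval : (((1 / 2) * (1 / (t + 1) - 1 / (t - 1)) : ℝ) : ℂ) = -(1 / ((t : ℂ) ^ 2 - 1)) := by
    have hr : ((1 / 2) * (1 / (t + 1) - 1 / (t - 1)) : ℝ) = -(1 / (t ^ 2 - 1)) := by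
      have h1 : t + 1 ≠ 0 := by linarith
      have h2 : t - 1 ≠ 0 := by linarith
      have h3 : t ^ 2 - 1 ≠ 0 := by nlinarith
      field_simp
      ring
    rw [hr]; push_cast; ring
  rw [hval] at h3
  exact h3

lemma hasDerivAt_funL (t : ℝ) (ht : 1 < t) :
    HasDerivAt funL (2 * (t : ℂ) / ((t : ℂ) ^ 2 - 1)) t := by
  have h0 : (t ^ 2 - 1 : ℝ) ≠ 0 := by nlinarith
  have h1 : HasDerivAt (fun s : ℝ => Real.log (s ^ 2 - 1)) (2 * t / (t ^ 2 - 1)) t := by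
    have := ((hasDerivAt_pow 2 t).sub_const 1).log h0
    simpa using this
  have h2 := h1.ofReal_comp
  have hval : ((2 * t / (t ^ 2 - 1) : ℝ) : ℂ) = 2 * (t : ℂ) / ((t : ℂ) ^ 2 - 1) := by
    push_cast; ring
  rw [hval] at h2
  exact h2

lemma hasDerivAt_coe (t : ℝ) : HasDerivAt (fun s : ℝ => (s : ℂ)) 1 t := by
  have := (hasDerivAt_id t).ofReal_comp
  simp at this
  exact this

lemma hasDerivAt_coe_pow (m : ℕ) (t : ℝ) :
    HasDerivAt (fun s : ℝ => (s : ℂ) ^ m) ((m : ℂ) * (t : ℂ) ^ (m - 1)) t :=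
  (hasDerivAt_pow m ((t : ℝ) : ℂ)).comp_ofReal

lemma GoodFun.add {f g : ℝ → ℂ} (hf : GoodFun f) (hg : GoodFun g) :
    GoodFun (fun t => f t + g t) := by
  obtain ⟨P, p, hP1, hP2⟩ := hf
  obtain ⟨Q, q, hQ1, hQ2⟩ := hg
  refine ⟨P + Q, fun t => p t + q t, fun t ht => ?_, fun t ht => (hP2 t ht).add (hQ2 t ht)⟩
  have : polyEv (P + Q) = fun s => polyEv P s + polyEv Q s := by
    funext s; simp [polyEv, map_add]
  rw [this]
  exact (hP1 t ht).add (hQ1 t ht)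

lemma GoodFun.smul (c : ℂ) {f : ℝ → ℂ} (hf : GoodFun f) : GoodFun (fun t => c * f t) := by
  obtain ⟨P, p, hP1, hP2⟩ := hf
  refine ⟨C c * P, fun t => c * p t, fun t ht => ?_, fun t ht => (hP2 t ht).const_mul c⟩
  have : polyEv (C c * P) = fun s => c * polyEv P s := by
    funext s; simp [polyEv]
  rw [this]
  exact (hP1 t ht).const_mul c

lemma GoodFun.congr {f g : ℝ → ℂ} (hf : GoodFun f) (h : ∀ t : ℝ, 1 < t → f t = g t) :
    GoodFun g := by
  obtain ⟨P, p, hP1, hP2⟩ := hf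
  exact ⟨P, p, hP1, fun t ht => (h t ht) ▸ hP2 t ht⟩

lemma GoodFun.zero : GoodFun (fun _ => (0 : ℂ)) := by
  refine ⟨0, fun _ => 0, fun t ht => ?_, fun t ht => hasDerivAt_const t 0⟩
  have : polyEv 0 = fun _ => (0 : ℂ) := by funext s; simp [polyEv]
  rw [this]
  exact hasDerivAt_const t 0

lemma GoodFun.sum {ι : Type*} (s : Finset ι) (F : ι → ℝ → ℂ)
    (h : ∀ i ∈ s, GoodFun (F i)) : GoodFun (fun t => ∑ i ∈ s, F i t) := by
  classical
  induction s using Finset.induction_on with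
  | empty => exact GoodFun.zero.congr (by intro t ht; simp)
  | insert j s' hni ih =>
    have := ((h j (mem_insert_self j s')).add (ih (fun i hi => h i (mem_insert_of_mem hi))))
    exact this.congr (by intro t ht; rw [Finset.sum_insert hni])

lemma good_monomial (m : ℕ) : GoodFun (fun t => (t : ℂ) ^ m) := by
  have hm1 : ((m : ℂ) + 1) ≠ 0 := by
    have : (((m + 1 : ℕ)) : ℂ) ≠ 0 := Nat.cast_ne_zero.mpr (Nat.succ_ne_zero m)
    push_cast at this; exact this
  have hm2 : ((m : ℂ) + 2) ≠ 0 := by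
    have : (((m + 2 : ℕ)) : ℂ) ≠ 0 := Nat.cast_ne_zero.mpr (Nat.succ_ne_zero (m + 1))
    push_cast at this; exact this
  refine ⟨C ((((m : ℂ) + 1) * ((m : ℂ) + 2))⁻¹) * X 0 ^ (m + 2),
    fun t => (t : ℂ) ^ (m + 1) / ((m : ℂ) + 1), fun t ht => ?_, fun t ht => ?_⟩
  · have hev : polyEv (C ((((m : ℂ) + 1) * ((m : ℂ) + 2))⁻¹) * X 0 ^ (m + 2)) =
        fun s : ℝ => (((m : ℂ) + 1) * ((m : ℂ) + 2))⁻¹ * (s : ℂ) ^ (m + 2) := by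
      funext s; simp [polyEv]
    rw [hev]
    have h := (hasDerivAt_coe_pow (m + 2) t).const_mul ((((m : ℂ) + 1) * ((m : ℂ) + 2))⁻¹)
    refine h.congr_deriv (Eq.symm ?_)
    have : (m + 2 - 1) = m + 1 := rfl
    rw [this]
    push_cast
    field_simp
  · have h := (hasDerivAt_coe_pow (m + 1) t).div_const ((m : ℂ) + 1)
    refine h.congr_deriv (Eq.symm ?_)
    have : (m + 1 - 1) = m := rfl
    rw [this]
    push_cast
    field_simp

lemma good_inv : GoodFun (fun t => 1 / ((t : ℂ) ^ 2 - 1)) := by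
  refine ⟨-(X 0 * X 1 + C (1 / 2 : ℂ) * X 2), fun t => -funU t,
    fun t ht => ?_, fun t ht => ?_⟩
  · have hev : polyEv (-(X 0 * X 1 + C (1 / 2 : ℂ) * X 2)) =
        fun s : ℝ => -((s : ℂ) * funU s + (1 / 2 : ℂ) * funL s) := by
      funext s; simp [polyEv, funU, funL]
    rw [hev]
    have hA := (hasDerivAt_coe t).mul (hasDerivAt_funU t ht)
    have hB := (hasDerivAt_funL t ht).const_mul (1 / 2 : ℂ)
    have h := (hA.add hB).neg
    refine h.congr_deriv (Eq.symm ?_)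
    have h0 := denom_ne t ht
    field_simp
    try ring
  · exact (hasDerivAt_funU t ht).neg.congr_deriv (neg_neg _)

lemma good_lin : GoodFun (fun t => (t : ℂ) / ((t : ℂ) ^ 2 - 1)) := by
  refine ⟨C (1 / 2 : ℂ) * (X 0 * X 2 - C 2 * X 0 + C 2 * X 1),
    fun t => (1 / 2 : ℂ) * funL t, fun t ht => ?_, fun t ht => ?_⟩
  · have hev : polyEv (C (1 / 2 : ℂ) * (X 0 * X 2 - C 2 * X 0 + C 2 * X 1)) =
        fun s : ℝ => (1 / 2 : ℂ) * ((s : ℂ) * funL s - 2 * (s : ℂ) + 2 * funU s) := by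
      funext s; simp [polyEv, funU, funL]; try ring
    rw [hev]
    have hA := (hasDerivAt_coe t).mul (hasDerivAt_funL t ht)
    have hB := (hasDerivAt_coe t).const_mul (2 : ℂ)
    have hC := (hasDerivAt_funU t ht).const_mul (2 : ℂ)
    have h := ((hA.sub hB).add hC).const_mul (1 / 2 : ℂ)
    refine h.congr_deriv (Eq.symm ?_)
    have h0 := denom_ne t ht
    field_simp
    try ring
  · have h := (hasDerivAt_funL t ht).const_mul (1 / 2 : ℂ)
    refine h.congr_deriv (Eq.symm ?_)
    have h0 := denom_ne t ht
    field_simp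

lemma good_pow_div_aux (n : ℕ) :
    GoodFun (fun t => (t : ℂ) ^ n / ((t : ℂ) ^ 2 - 1)) ∧
    GoodFun (fun t => (t : ℂ) ^ (n + 1) / ((t : ℂ) ^ 2 - 1)) := by
  induction n with
  | zero =>
    exact ⟨good_inv.congr (by intro t ht; simp),
      good_lin.congr (by intro t ht; simp)⟩
  | succ m ih =>
    refine ⟨ih.2, ?_⟩
    have h := (good_monomial m).add ih.1
    refine h.congr ?_
    intro t ht
    have h0 := denom_ne t ht
    field_simp
    try ring

lemma good_pow_div (n : ℕ) : GoodFun (fun t => (t : ℂ) ^ n / ((t : ℂ) ^ 2 - 1)) :=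
  (good_pow_div_aux n).1

/-- Twice antidifferentiating `(at+b)^k/(t²-1)` stays inside the algebra
`ℂ[t, arctanh(1/t), log(t²-1)]`: there is a polynomial expression `F` in `t`,
`arctanh(1/t) = (1/2)log((t+1)/(t-1))` and `log(t²-1)` whose second derivative
is `(at+b)^k/(t²-1)` on `t > 1`. -/
theorem double_integral_in_polylog_algebra (a b : ℂ) (k : ℕ) (hk : 1 ≤ k) :
    ∃ P : MvPolynomial (Fin 3) ℂ,
      (∀ t : ℝ, 1 < t → DifferentiableAt ℝ
        (fun s : ℝ => MvPolynomial.eval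
          (![(s : ℂ),
             (((1 / 2) * Real.log ((s + 1) / (s - 1)) : ℝ) : ℂ),
             ((Real.log (s ^ 2 - 1) : ℝ) : ℂ)]) P) t) ∧
      (∀ t : ℝ, 1 < t → HasDerivAt
        (deriv (fun s : ℝ => MvPolynomial.eval
          (![(s : ℂ),
             (((1 / 2) * Real.log ((s + 1) / (s - 1)) : ℝ) : ℂ),
             ((Real.log (s ^ 2 - 1) : ℝ) : ℂ)]) P))
        ((a * (t : ℂ) + b) ^ k / ((t : ℂ) ^ 2 - 1)) t) := by
  have hgood : GoodFun (fun t : ℝ => (a * (t : ℂ) + b) ^ k / ((t : ℂ) ^ 2 - 1)) := by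
    have hsum := GoodFun.sum (Finset.range (k + 1))
      (fun j => fun t : ℝ => (a ^ j * b ^ (k - j) * (k.choose j : ℂ)) *
        ((t : ℂ) ^ j / ((t : ℂ) ^ 2 - 1)))
      (fun j _ => (good_pow_div j).smul _)
    refine hsum.congr ?_
    intro t ht
    rw [add_pow, Finset.sum_div]
    refine Finset.sum_congr rfl ?_
    intro j _
    rw [mul_pow]
    ring
  obtain ⟨P, g, h1, h2⟩ := hgood
  refine ⟨P, fun t ht => (h1 t ht).differentiableAt, fun t ht => ?_⟩
  have heq : deriv (fun s : ℝ => MvPolynomial.eval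
      (![(s : ℂ),
         (((1 / 2) * Real.log ((s + 1) / (s - 1)) : ℝ) : ℂ),
         ((Real.log (s ^ 2 - 1) : ℝ) : ℂ)]) P) =ᶠ[nhds t] g := by
    filter_upwards [isOpen_Ioi.mem_nhds ht] with s hs
    exact (h1 s hs).deriv
  exact (h2 t ht).congr_of_eventuallyEq heq
end
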